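/- For g(y) = e^{−y²/2} y^{2m+1} − 2m·e^{−y²/2} y^{2m−1} (m ≥ 0, with the second term absent when m = 0), the function x ↦ (1/2)∫_ℝ g(y) sgn(y−x) dy equals x^{2m} e^{−x²/2}. -/

import Mathlib

open MeasureTheory Real Filter Set Topology

lemma eps_aux_integrable (n : ℕ) :
    Integrable (fun y : ℝ => Real.exp (-y ^ 2 / 2) * y ^ n) := by
  have h := integrable_rpow_mul_exp_neg_mul_sq (b := (1:ℝ)/2) (by norm_num)
      (s := (n : ℝ)) (lt_of_lt_of_le (by norm_num) (Nat.cast_nonneg n))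
  refine h.congr ?_
  filter_upwards with y
  rw [rpow_natCast]
  ring_nf

lemma eps_aux_deriv (m : ℕ) (y : ℝ) :
    HasDerivAt (fun y : ℝ => y ^ (2 * m) * Real.exp (-y ^ 2 / 2))
      (-(Real.exp (-y ^ 2 / 2) * y ^ (2 * m + 1)
          - (2 * m : ℝ) * Real.exp (-y ^ 2 / 2) * y ^ (2 * m - 1))) y := by
  have h1 : HasDerivAt (fun y : ℝ => -y ^ 2 / 2) (-y) y := by
    have h : HasDerivAt (fun y : ℝ => -y ^ 2 / 2) (-(((2:ℕ):ℝ) * y ^ (2 - 1)) / 2) y :=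
      ((hasDerivAt_pow 2 y).neg).div_const 2
    convert h using 1
    ring
  have h2 : HasDerivAt (fun y : ℝ => y ^ (2 * m) * Real.exp (-y ^ 2 / 2))
      (((2 * m : ℕ) : ℝ) * y ^ (2 * m - 1) * Real.exp (-y ^ 2 / 2)
        + y ^ (2 * m) * (Real.exp (-y ^ 2 / 2) * -y)) y :=
    (hasDerivAt_pow (2 * m) y).mul h1.exp
  convert h2 using 1
  rcases Nat.eq_zero_or_pos m with hm | hm
  · subst hm; simp
  · obtain ⟨k, hk⟩ : ∃ k, 2 * m = k + 1 := ⟨2 * m - 1, by omega⟩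
    have hk' : ((2 * m : ℕ) : ℝ) = (k : ℝ) + 1 := by exact_mod_cast hk
    push_cast at hk'
    simp only [hk, Nat.add_sub_cancel]
    push_cast
    linear_combination (y ^ k * Real.exp (-y ^ 2 / 2)) * hk'

lemma eps_aux_tendsto_top (m : ℕ) :
    Tendsto (fun y : ℝ => y ^ (2 * m) * Real.exp (-y ^ 2 / 2)) atTop (𝓝 0) := by
  have h1 : Tendsto (fun t : ℝ => t ^ m * Real.exp (-t)) atTop (𝓝 0) :=
    tendsto_pow_mul_exp_neg_atTop_nhds_zero m
  have h2 : Tendsto (fun y : ℝ => y ^ 2 / 2) atTop atTop :=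
    (tendsto_pow_atTop (by norm_num)).atTop_div_const (by norm_num)
  have h3 := (h1.comp h2).const_mul ((2:ℝ) ^ m)
  rw [mul_zero] at h3
  refine h3.congr fun y => ?_
  simp only [Function.comp]
  rw [pow_mul, div_pow, neg_div]
  field_simp

lemma eps_aux_tendsto_bot (m : ℕ) :
    Tendsto (fun y : ℝ => y ^ (2 * m) * Real.exp (-y ^ 2 / 2)) atBot (𝓝 0) := by
  have h := (eps_aux_tendsto_top m).comp tendsto_neg_atBot_atTop
  refine h.congr fun y => ?_
  simp only [Function.comp]
  rw [neg_sq, (even_two_mul m).neg_pow]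

/-- For `g(y) = e^{−y²/2} y^{2m+1} − 2m e^{−y²/2} y^{2m−1}`,
`(1/2)∫ g(y) sgn(y−x) dy = x^{2m} e^{−x²/2}`.  (When `m = 0` the second term
vanishes, since the coefficient `2m` is zero.) -/
theorem eps_odd_moment (m : ℕ) (x : ℝ) :
    (1 / 2) * ∫ y : ℝ,
        (Real.exp (-y ^ 2 / 2) * y ^ (2 * m + 1)
          - (2 * m : ℝ) * Real.exp (-y ^ 2 / 2) * y ^ (2 * m - 1)) * Real.sign (y - x)
      = x ^ (2 * m) * Real.exp (-x ^ 2 / 2) := by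
  set g : ℝ → ℝ := fun y => Real.exp (-y ^ 2 / 2) * y ^ (2 * m + 1)
      - (2 * m : ℝ) * Real.exp (-y ^ 2 / 2) * y ^ (2 * m - 1) with hg_def
  set F : ℝ → ℝ := fun y => y ^ (2 * m) * Real.exp (-y ^ 2 / 2) with hF_def
  have hgint : Integrable g := by
    refine (eps_aux_integrable (2 * m + 1)).sub ?_
    have := (eps_aux_integrable (2 * m - 1)).const_mul (2 * m : ℝ)
    refine this.congr ?_
    filter_upwards with y using by ring
  have hgnegint : Integrable (fun y => -g y) := hgint.neg
  have hne : ∀ᵐ y : ℝ, y ≠ x := by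
    rw [ae_iff]
    simpa [not_not, Set.setOf_eq_eq_singleton] using Real.volume_singleton (a := x)
  -- a.e. equalities on the two half-lines
  have hIic_ae : (fun y => g y * Real.sign (y - x)) =ᵐ[volume.restrict (Iic x)]
      (fun y => -g y) := by
    filter_upwards [ae_restrict_mem measurableSet_Iic, ae_restrict_of_ae hne] with y hy hy'
    have : y - x < 0 := by
      rcases lt_of_le_of_ne hy hy' with h
      linarith
    rw [Real.sign_of_neg this]
    ring
  have hIoi_ae : (fun y => g y * Real.sign (y - x)) =ᵐ[volume.restrict (Ioi x)]
      (fun y => g y) := by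
    filter_upwards [ae_restrict_mem measurableSet_Ioi] with y hy
    have : (0:ℝ) < y - x := by simpa [sub_pos] using hy
    rw [Real.sign_of_pos this]
    ring
  -- evaluate the two half-line integrals of -g
  have hIic : ∫ y in Iic x, -g y = F x := by
    have := integral_Iic_of_hasDerivAt_of_tendsto' (f := F) (f' := fun y => -g y) (a := x)
      (m := 0) (fun y _ => eps_aux_deriv m y) hgnegint.integrableOn (eps_aux_tendsto_bot m)
    simpa using this
  have hIoi : ∫ y in Ioi x, g y = F x := by
    have := integral_Ioi_of_hasDerivAt_of_tendsto' (f := F) (f' := fun y => -g y) (a := x)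
      (m := 0) (fun y _ => eps_aux_deriv m y) hgnegint.integrableOn (eps_aux_tendsto_top m)
    rw [integral_neg] at this
    have h0 : ∫ y in Ioi x, g y = -(0 - F x) := by
      rw [← this]; ring
    simpa using h0
  -- assemble
  have hsplit : ∫ y : ℝ, g y * Real.sign (y - x)
      = (∫ y in Iic x, g y * Real.sign (y - x)) + ∫ y in Ioi x, g y * Real.sign (y - x) := by
    rw [intervalIntegral.integral_Iic_add_Ioi]
    · exact (hgnegint.integrableOn).congr hIic_ae.symm
    · exact (hgint.integrableOn).congr hIoi_ae.symm
  rw [show (∫ y : ℝ,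
        (Real.exp (-y ^ 2 / 2) * y ^ (2 * m + 1)
          - (2 * m : ℝ) * Real.exp (-y ^ 2 / 2) * y ^ (2 * m - 1)) * Real.sign (y - x))
      = ∫ y : ℝ, g y * Real.sign (y - x) from rfl]
  rw [hsplit, integral_congr_ae hIic_ae, integral_congr_ae hIoi_ae, hIic, hIoi]
  show (1:ℝ) / 2 * (F x + F x) = F x
  ring
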